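/- Fix a real number A with 0 < A < 1, positive integers P, Q, and set c := P/Q. Let z be real with 0 < z < A, and set U := A^{−c}/z (real power of the positive number A). Then (1 − A^{c+1}U)/(1 − A^{c−1}U) = (z−A)/(z−A⁻¹) is positive; define Λ(U) := U·((1 − A^{c+1}U)/(1 − A^{c−1}U))^c using the real power of this positive ratio, X^BEM(U) := Λ(U)^{−Q}, and X^ACEH(z) := z·((1−Az)/(1−A⁻¹z))^c (the base (1−Az)/(1−A⁻¹z) is positive since 0 < z < A < 1). Then X^ACEH(z) = A^c · (X^BEM(U))^{1/Q}, where (X^BEM(U))^{1/Q} is the real power of the positive number X^BEM(U). -/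

import Mathlib

open Real

/-- Comparison of the Brini–Eynard–Mariño and ACEH spectral curve functions (first identity):
with `c = P/Q`, `U = A^{-c}/z` for `0 < z < A < 1`, the ratio
`(1 - A^{c+1}U)/(1 - A^{c-1}U)` equals `(z - A)/(z - A⁻¹)` and is positive, and
`X^ACEH(z) = A^c · (X^BEM(U))^{1/Q}` where `Λ(U) = U·((1-A^{c+1}U)/(1-A^{c-1}U))^c`,
`X^BEM(U) = Λ(U)^{-Q}`, `X^ACEH(z) = z·((1-Az)/(1-A⁻¹z))^c`. -/
theorem stmt_2 (A : ℝ) (hA0 : 0 < A) (hA1 : A < 1) (P Q : ℕ) (hP : 0 < P) (hQ : 0 < Q)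
    (z : ℝ) (hz0 : 0 < z) (hzA : z < A)
    (c U : ℝ) (hc : c = (P : ℝ) / (Q : ℝ)) (hU : U = A ^ (-c) / z) :
    (1 - A ^ (c + 1) * U) / (1 - A ^ (c - 1) * U) = (z - A) / (z - A⁻¹) ∧
    0 < (z - A) / (z - A⁻¹) ∧
    z * ((1 - A * z) / (1 - A⁻¹ * z)) ^ c
      = A ^ c *
        ((U * ((1 - A ^ (c + 1) * U) / (1 - A ^ (c - 1) * U)) ^ c) ^ (-(Q : ℝ)))
          ^ ((Q : ℝ)⁻¹) := by
  have hzne : z ≠ 0 := ne_of_gt hz0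
  have hAne : A ≠ 0 := ne_of_gt hA0
  have hAinv : 1 < A⁻¹ := (one_lt_inv₀ hA0).mpr hA1
  have hzAinv : z < A⁻¹ := lt_trans hzA (lt_trans hA1 hAinv)
  have hzAne : z - A ≠ 0 := sub_ne_zero_of_ne (ne_of_lt hzA)
  have hzAinvne : z - A⁻¹ ≠ 0 := sub_ne_zero_of_ne (ne_of_lt hzAinv)
  have h1 : A ^ (c + 1) * U = A / z := by
    rw [hU, ← mul_div_assoc, ← Real.rpow_add hA0]
    norm_num
  have h2 : A ^ (c - 1) * U = A⁻¹ / z := by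
    rw [hU, ← mul_div_assoc, ← Real.rpow_add hA0]
    have he : c - 1 + -c = -1 := by ring
    rw [he, Real.rpow_neg_one]
  have hr : (1 - A ^ (c + 1) * U) / (1 - A ^ (c - 1) * U) = (z - A) / (z - A⁻¹) := by
    rw [h1, h2]
    have e1 : 1 - A / z = (z - A) / z := by field_simp
    have e2 : 1 - A⁻¹ / z = (z - A⁻¹) / z := by field_simp
    rw [e1, e2]
    rw [div_div_div_comm, div_self hzne, div_one]
  refine ⟨hr, ?_, ?_⟩
  · exact div_pos_of_neg_of_neg (by linarith) (by linarith)
  · rw [hr]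
    set r : ℝ := (z - A) / (z - A⁻¹) with hrdef
    have hrpos : 0 < r := div_pos_of_neg_of_neg (by linarith) (by linarith)
    have hU0 : 0 < U := by rw [hU]; positivity
    have hL : 0 < U * r ^ c := mul_pos hU0 (Real.rpow_pos_of_pos hrpos c)
    have hQne : (Q : ℝ) ≠ 0 := Nat.cast_ne_zero.mpr hQ.ne'
    have hLQ : ((U * r ^ c) ^ (-(Q : ℝ))) ^ ((Q : ℝ)⁻¹) = (U * r ^ c)⁻¹ := by
      rw [← Real.rpow_mul hL.le]
      have he : -(Q : ℝ) * (Q : ℝ)⁻¹ = -1 := by field_simp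
      rw [he, Real.rpow_neg_one]
    rw [hLQ]
    have h1z : 1 - A⁻¹ * z ≠ 0 := by
      have : A⁻¹ * z < 1 := by
        rw [inv_mul_lt_iff₀ hA0, mul_one]; exact hzA
      linarith
    have hs : (1 - A * z) / (1 - A⁻¹ * z) = A * A / r := by
      rw [hrdef, div_div_eq_mul_div, div_eq_div_iff h1z hzAne]
      field_simp
      ring
    rw [hs]
    have hA2 : (0:ℝ) ≤ A * A := by positivity
    rw [Real.div_rpow hA2 hrpos.le, Real.mul_rpow hA0.le hA0.le]
    have hUinv : U⁻¹ = z * A ^ c := by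
      rw [hU, Real.rpow_neg hA0.le]
      field_simp
    rw [mul_inv, hUinv]
    ring
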